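/- Let V_max > 0 and let P ∈ (0,1) be fixed. For σ² > 0 set c^A = 2/(σ²P) + 2 and define R_A(u) = (V_max − u)²/((c^A − 2)(c^A − 1)) − V_max^{2−c^A}(V_max − u)^{c^A}/((c^A − 2)(c^A − 1)) − u·V_max^{1−c^A}(V_max − u)^{c^A}/(c^A − 1). Then R_A(V_max·P) → 0 as σ² → 0⁺. -/

import Mathlib

open Filter Set Real

/-- The acceleration part `R_A` of the equilibrium condition, evaluated at the Greenshields
speed `u = V_max · P`, tends to `0` as the variance `σ² → 0⁺`.
Here `c^A = 2/(σ²P) + 2`. -/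
theorem RA_tendsto_zero (Vmax P : ℝ) (hV : 0 < Vmax) (hP : P ∈ Set.Ioo (0 : ℝ) 1) :
    Tendsto (fun s : ℝ =>
        (Vmax - Vmax * P) ^ 2 / ((2 / (s * P) + 2 - 2) * (2 / (s * P) + 2 - 1))
          - Vmax ^ (2 - (2 / (s * P) + 2)) * (Vmax - Vmax * P) ^ (2 / (s * P) + 2)
              / ((2 / (s * P) + 2 - 2) * (2 / (s * P) + 2 - 1))
          - Vmax * P * Vmax ^ (1 - (2 / (s * P) + 2)) * (Vmax - Vmax * P) ^ (2 / (s * P) + 2)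
              / (2 / (s * P) + 2 - 1))
      (nhdsWithin 0 (Set.Ioi 0)) (nhds 0) := by
  obtain ⟨hP0, hP1⟩ := hP
  have hb0 : (0:ℝ) < 1 - P := by linarith
  have hA : Vmax - Vmax * P = Vmax * (1 - P) := by ring
  have hApos : 0 < Vmax - Vmax * P := by rw [hA]; positivity
  -- the function of c
  set F : ℝ → ℝ := fun c =>
      (Vmax - Vmax * P) ^ 2 * ((c - 2) * (c - 1))⁻¹
        - Vmax ^ (2:ℝ) * ((1 - P) ^ c * ((c - 2) * (c - 1))⁻¹)
        - Vmax * P * Vmax * ((1 - P) ^ c * (c - 1)⁻¹) with hF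
  have hFeq : ∀ c : ℝ,
      (Vmax - Vmax * P) ^ 2 / ((c - 2) * (c - 1))
        - Vmax ^ (2 - c) * (Vmax - Vmax * P) ^ c / ((c - 2) * (c - 1))
        - Vmax * P * Vmax ^ (1 - c) * (Vmax - Vmax * P) ^ c / (c - 1) = F c := by
    intro c
    have h1 : (Vmax - Vmax * P) ^ c = Vmax ^ c * (1 - P) ^ c := by
      rw [hA, Real.mul_rpow hV.le hb0.le]
    have h2 : Vmax ^ (2 - c) * Vmax ^ c = Vmax ^ (2:ℝ) := by
      rw [← Real.rpow_add hV]; ring_nf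
    have h3 : Vmax ^ (1 - c) * Vmax ^ c = Vmax := by
      rw [← Real.rpow_add hV]; norm_num
    rw [hF]
    simp only
    rw [h1, div_eq_mul_inv, div_eq_mul_inv, div_eq_mul_inv]
    calc (Vmax - Vmax * P) ^ 2 * ((c - 2) * (c - 1))⁻¹
          - Vmax ^ (2 - c) * (Vmax ^ c * (1 - P) ^ c) * ((c - 2) * (c - 1))⁻¹
          - Vmax * P * Vmax ^ (1 - c) * (Vmax ^ c * (1 - P) ^ c) * (c - 1)⁻¹
        = (Vmax - Vmax * P) ^ 2 * ((c - 2) * (c - 1))⁻¹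
          - (Vmax ^ (2 - c) * Vmax ^ c) * ((1 - P) ^ c * ((c - 2) * (c - 1))⁻¹)
          - Vmax * P * (Vmax ^ (1 - c) * Vmax ^ c) * ((1 - P) ^ c * (c - 1)⁻¹) := by ring
      _ = _ := by rw [h2, h3]
  -- F tends to 0 at atTop
  have hc1 : Tendsto (fun c : ℝ => c - 1) atTop atTop :=
    tendsto_atTop_add_const_right _ _ tendsto_id
  have hc2 : Tendsto (fun c : ℝ => c - 2) atTop atTop :=
    tendsto_atTop_add_const_right _ _ tendsto_id
  have hprod : Tendsto (fun c : ℝ => (c - 2) * (c - 1)) atTop atTop :=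
    hc2.atTop_mul_atTop₀ hc1
  have hinv1 : Tendsto (fun c : ℝ => ((c - 2) * (c - 1))⁻¹) atTop (nhds 0) :=
    hprod.inv_tendsto_atTop
  have hinv2 : Tendsto (fun c : ℝ => (c - 1)⁻¹) atTop (nhds 0) :=
    hc1.inv_tendsto_atTop
  have hpow : Tendsto (fun c : ℝ => (1 - P) ^ c) atTop (nhds 0) :=
    tendsto_rpow_atTop_of_base_lt_one _ (by linarith) (by linarith)
  have hFlim : Tendsto F atTop (nhds 0) := by
    have := ((hinv1.const_mul ((Vmax - Vmax * P) ^ 2)).sub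
        ((hpow.mul hinv1).const_mul (Vmax ^ (2:ℝ)))).sub
        ((hpow.mul hinv2).const_mul (Vmax * P * Vmax))
    simpa only [mul_zero, zero_mul, sub_zero] using this
  -- inner map tends to atTop
  have hinner : Tendsto (fun s : ℝ => 2 / (s * P) + 2) (nhdsWithin 0 (Set.Ioi 0)) atTop := by
    apply tendsto_atTop_add_const_right
    have h : Tendsto (fun s : ℝ => s * P) (nhdsWithin 0 (Set.Ioi 0))
        (nhdsWithin 0 (Set.Ioi 0)) := by
      rw [tendsto_nhdsWithin_iff]
      constructor
      · have : Tendsto (fun s : ℝ => s * P) (nhds 0) (nhds 0) := by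
          simpa using (tendsto_id.mul_const P : Tendsto (fun s : ℝ => s * P) (nhds 0) (nhds (0 * P)))
        exact this.mono_left nhdsWithin_le_nhds
      · filter_upwards [self_mem_nhdsWithin] with s hs
        exact mul_pos hs hP0
    have h2 : Tendsto (fun x : ℝ => 2 / x) (nhdsWithin 0 (Set.Ioi 0)) atTop := by
      simpa [div_eq_mul_inv] using (tendsto_inv_nhdsGT_zero.const_mul_atTop (by norm_num : (0:ℝ) < 2))
    exact h2.comp h
  have := hFlim.comp hinner
  refine this.congr fun s => ?_
  simpa using (hFeq (2 / (s * P) + 2)).symm
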